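/- Let ū ∈ ℝᵐ with ū_i ≠ 0 for all i and a_i > 0, and let ξ¹,...,ξᵐ ∈ ℝᵐ be points such that for each j: ⟨ū, Aξ^j⟩ = 0 and a_i ξ_i^j = b_i for all i ≠ j (A = diag(a_i)), and suppose the ξ^j are pairwise distinct. Then for any fixed j, the m − 1 vectors ζ^{ij} = ξ^i − ξ^j (i ≠ j) are linearly independent; hence ξ¹,...,ξᵐ are the vertices of an (m−1)-simplex in the hyperplane V = {x : ⟨ū, Ax⟩ = 0}. -/
import Mathlib


open Matrix

theorem stmt_19 {m : ℕ} (u : Fin m → ℝ) (hu : ∀ i, u i ≠ 0)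
    (a : Fin m → ℝ) (ha : ∀ i, 0 < a i) (b : Fin m → ℝ)
    (ξ : Fin m → (Fin m → ℝ))
    (hplane : ∀ j, u ⬝ᵥ (Matrix.diagonal a).mulVec (ξ j) = 0)
    (hcoord : ∀ j, ∀ i, i ≠ j → a i * ξ j i = b i)
    (hdist : Function.Injective ξ) :
    (∀ j : Fin m, LinearIndependent ℝ (fun i : {i : Fin m // i ≠ j} => ξ i - ξ j)) ∧
      AffineIndependent ℝ ξ := by
  have key : ∀ j : Fin m, LinearIndependent ℝ (fun i : {i : Fin m // i ≠ j} => ξ i - ξ j) := by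
    intro j
    -- off-support coordinates vanish
    have hzero : ∀ i k : Fin m, i ≠ j → k ≠ i → k ≠ j → ξ i k - ξ j k = 0 := by
      intro i k hij hki hkj
      have h1 := hcoord i k hki
      have h2 := hcoord j k hkj
      have h : a k * (ξ i k - ξ j k) = 0 := by rw [mul_sub, h1, h2]; ring
      rcases mul_eq_zero.mp h with h | h
      · exact absurd h (ha k).ne'
      · exact h
    have hsum : ∀ x : Fin m → ℝ, u ⬝ᵥ (Matrix.diagonal a).mulVec x
        = ∑ k, u k * (a k * x k) := by
      intro x
      simp [dotProduct, Matrix.mulVec_diagonal]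
    have hdiag : ∀ i : Fin m, i ≠ j → ξ i i - ξ j i ≠ 0 := by
      intro i hij hdi
      have hS : ∑ k, u k * (a k * (ξ i k - ξ j k)) = 0 := by
        have := hplane i
        have h2 := hplane j
        rw [hsum] at this h2
        calc ∑ k, u k * (a k * (ξ i k - ξ j k))
            = (∑ k, u k * (a k * ξ i k)) - ∑ k, u k * (a k * ξ j k) := by
              rw [← Finset.sum_sub_distrib]; apply Finset.sum_congr rfl; intros; ring
          _ = 0 := by rw [this, h2]; ring
      have hzk : ∀ k : Fin m, k ≠ j → ξ i k - ξ j k = 0 := by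
        intro k hkj
        by_cases hki : k = i
        · subst hki; exact hdi
        · exact hzero i k hij hki hkj
      have hsingle : ∑ k, u k * (a k * (ξ i k - ξ j k)) = u j * (a j * (ξ i j - ξ j j)) := by
        apply Finset.sum_eq_single
        · intro k _ hk
          rw [hzk k hk]; ring
        · intro hk; exact absurd (Finset.mem_univ j) hk
      rw [hsingle] at hS
      have hzj : ξ i j - ξ j j = 0 := by
        rcases mul_eq_zero.mp hS with h | h
        · exact absurd h (hu j)
        rcases mul_eq_zero.mp h with h | h
        · exact absurd h (ha j).ne'
        · exact h
      have : ξ i = ξ j := by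
        funext k
        by_cases hkj : k = j
        · subst hkj; linarith [hzj]
        · have := hzk k hkj; linarith
      exact hij (hdist this)
    rw [Fintype.linearIndependent_iff]
    intro g hg i₀
    have := congrFun hg i₀.1
    simp only [Finset.sum_apply, Pi.smul_apply, Pi.sub_apply, smul_eq_mul,
      Pi.zero_apply] at this
    have hsingle : ∑ i : {i : Fin m // i ≠ j}, g i * (ξ i.1 i₀.1 - ξ j i₀.1)
        = g i₀ * (ξ i₀.1 i₀.1 - ξ j i₀.1) := by
      apply Finset.sum_eq_single
      · intro k _ hk
        have hk' : i₀.1 ≠ k.1 := fun h => hk (Subtype.ext h.symm)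
        rw [hzero k.1 i₀.1 k.2 hk' i₀.2]; ring
      · intro hk; exact absurd (Finset.mem_univ i₀) hk
    rw [hsingle] at this
    rcases mul_eq_zero.mp this with h | h
    · exact h
    · exact absurd h (hdiag i₀.1 i₀.2)
  refine ⟨key, ?_⟩
  rcases Nat.eq_zero_or_pos m with hm | hm
  · haveI : IsEmpty (Fin m) := by rw [hm]; infer_instance
    apply affineIndependent_of_subsingleton
  · have j : Fin m := ⟨0, hm⟩
    rw [affineIndependent_iff_linearIndependent_vsub ℝ ξ j]
    simpa [vsub_eq_sub] using key j
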